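/- Let α be a positive integer, 0 < p = 1 - q < 1, z > 1, and let k satisfy 2 ≤ k < z and k ≤ α. Then h₁(k) = ∑_{j=k}^{α} [(α-k)!/(α-j)!]·[(k-1)!/j!]·(p/q)^{j-k}·(j-z)^+ satisfies h₁(k) ≤ (q^{k-α} - 1)/z. -/

import Mathlib

open Finset

/-- `E[(B_{α,p} - z)^+]`, the expected call function of a binomial random variable
`B_{α,p}` with `P(B = j) = C(α,j) p^j (1-p)^{α-j}` for `j = 0,…,α`. -/
noncomputable def binomCallExp (α : ℕ) (p z : ℝ) : ℝ :=
  ∑ j ∈ Finset.range (α + 1),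
    (α.choose j : ℝ) * p ^ j * (1 - p) ^ (α - j) * max ((j : ℝ) - z) 0

/-- `h₁(k) = ∑_{j=k}^{α} [(α-k)!/(α-j)!]·[(k-1)!/j!]·(p/q)^{j-k}·(j-z)^+` with `q = 1 - p`. -/
noncomputable def h1 (α : ℕ) (p z : ℝ) (k : ℕ) : ℝ :=
  ∑ j ∈ Finset.Icc k α,
    ((α - k).factorial : ℝ) / ((α - j).factorial : ℝ) *
      (((k - 1).factorial : ℝ) / (j.factorial : ℝ)) *
        (p / (1 - p)) ^ (j - k) * max ((j : ℝ) - z) 0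

/-- `h₂(k) = ∑_{j=k}^{α} [(α-k)!/(α-j)!]·[(k-1)!/j!]·(p/q)^{j-k}·E[(B_{α,p}-z)^+]`
with `q = 1 - p`. -/
noncomputable def h2 (α : ℕ) (p z : ℝ) (k : ℕ) : ℝ :=
  ∑ j ∈ Finset.Icc k α,
    ((α - k).factorial : ℝ) / ((α - j).factorial : ℝ) *
      (((k - 1).factorial : ℝ) / (j.factorial : ℝ)) *
        (p / (1 - p)) ^ (j - k) * binomCallExp α p z

/-- The solution `g_z` of the binomial Stein equation: `g_z(0) = 0`,
`g_z(k) = -∑_{j=k}^{α} [(α-k)!/(α-j)!]·[(k-1)!/j!]·(p/q)^{j-k}·[(j-z)^+ - E(B_{α,p}-z)^+]`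
for `1 ≤ k ≤ α`, extended by `g_z(k) = 0` for `k > α` (in particular `g_z(α+1) = 0`). -/
noncomputable def steinSol (α : ℕ) (p z : ℝ) (k : ℕ) : ℝ :=
  if k = 0 ∨ α < k then 0
  else
    -∑ j ∈ Finset.Icc k α,
      ((α - k).factorial : ℝ) / ((α - j).factorial : ℝ) *
        (((k - 1).factorial : ℝ) / (j.factorial : ℝ)) *
          (p / (1 - p)) ^ (j - k) * (max ((j : ℝ) - z) 0 - binomCallExp α p z)

/-- For `z > 1` and `2 ≤ k < z` with `k ≤ α`,
`h₁(k) ≤ (q^{k-α} - 1)/z`. -/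
private lemma nat_key : ∀ (k i : ℕ), 2 ≤ k → 1 ≤ i →
    (k + i) ^ 2 * i.factorial * (k - 1).factorial ≤ 4 * (k + i).factorial := by
  intro k i hk hi
  induction i with
  | zero => omega
  | succ n ih =>
    rcases Nat.eq_zero_or_pos n with rfl | hn
    · obtain ⟨m, rfl⟩ : ∃ m, k = m + 2 := ⟨k - 2, by omega⟩
      have h1 : (m + 2 + 1).factorial = (m + 3) * (m + 2) * (m + 1).factorial := by
        rw [show m + 2 + 1 = (m+2)+1 from rfl, Nat.factorial_succ, Nat.factorial_succ]
        ring
      rw [show m + 2 + (0+1) = m + 2 + 1 from rfl, show m + 2 - 1 = m + 1 from rfl, h1]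
      calc (m + 2 + 1) ^ 2 * (0+1).factorial * (m + 1).factorial
          = (m + 3) ^ 2 * (m + 1).factorial := by norm_num [Nat.factorial]
        _ ≤ (4 * ((m + 3) * (m + 2))) * (m + 1).factorial :=
            Nat.mul_le_mul_right _ (by nlinarith)
        _ = 4 * ((m + 3) * (m + 2) * (m + 1).factorial) := by ring
    · have ih' := ih hn
      have hfac : (k + (n+1)).factorial = (k + n + 1) * (k + n).factorial := by
        rw [show k + (n+1) = (k+n)+1 from rfl, Nat.factorial_succ]
      have hstep : (k + (n+1)) ^ 2 * (n+1).factorial ≤ (k + n + 1) * ((k + n) ^ 2 * n.factorial) := by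
        rw [Nat.factorial_succ]
        have h2 : (k + n + 1) * (n + 1) ≤ (k + n) ^ 2 := by nlinarith
        calc (k + (n+1)) ^ 2 * ((n+1) * n.factorial)
            = ((k + n + 1) * (n + 1)) * ((k + n + 1) * n.factorial) := by ring
          _ ≤ (k + n) ^ 2 * ((k + n + 1) * n.factorial) :=
              Nat.mul_le_mul_right _ h2
          _ = (k + n + 1) * ((k + n) ^ 2 * n.factorial) := by ring
      calc (k + (n+1)) ^ 2 * (n+1).factorial * (k-1).factorial
          ≤ (k + n + 1) * ((k + n) ^ 2 * n.factorial) * (k-1).factorial :=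
            Nat.mul_le_mul_right _ hstep
        _ = (k + n + 1) * ((k + n) ^ 2 * n.factorial * (k-1).factorial) := by ring
        _ ≤ (k + n + 1) * (4 * (k + n).factorial) := Nat.mul_le_mul_left _ ih'
        _ = 4 * (k + (n+1)).factorial := by rw [hfac]; ring

theorem h1_le_of_lt (α : ℕ) (hα : 0 < α) (p q : ℝ)
    (hq : q = 1 - p) (hp : 0 < p) (hp1 : p < 1) (z : ℝ) (hz : 1 < z)
    (k : ℕ) (hk : 2 ≤ k) (hkz : (k : ℝ) < z) (hkα : k ≤ α) :
    h1 α p z k ≤ (q ^ ((k : ℤ) - (α : ℤ)) - 1) / z := by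
  unfold h1
  have hq0 : 0 < q := by rw [hq]; linarith
  have hz0 : 0 < z := by linarith
  have hr : 0 ≤ p / q := by positivity
  set g : ℕ → ℝ := fun j => if j = k then 0 else ((α - k).choose (j - k) : ℝ) * (p / q) ^ (j - k) / z with hg
  have step1 : (∑ j ∈ Finset.Icc k α,
      ((α - k).factorial : ℝ) / ((α - j).factorial : ℝ) *
        (((k - 1).factorial : ℝ) / (j.factorial : ℝ)) *
          (p / (1 - p)) ^ (j - k) * max ((j : ℝ) - z) 0) ≤ ∑ j ∈ Finset.Icc k α, g j := by
    apply Finset.sum_le_sum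
    intro j hj
    rw [Finset.mem_Icc] at hj
    rw [← hq]
    by_cases hjk : j = k
    · subst hjk
      have : max ((j : ℝ) - z) 0 = 0 := max_eq_right (by linarith)
      simp [hg, this]
    · obtain ⟨i, rfl⟩ : ∃ i, j = k + i := ⟨j - k, by omega⟩
      have hi1 : 1 ≤ i := by omega
      have hik : k + i - k = i := by omega
      simp only [hg, hjk, if_false, hik]
      have hfac : ((α - k).factorial : ℝ) / ((α - (k + i)).factorial : ℝ)
          = ((α - k).choose i : ℝ) * (i.factorial : ℝ) := by
        have h2 := Nat.choose_mul_factorial_mul_factorial (show i ≤ α - k by omega)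
        have h3 : α - k - i = α - (k + i) := by omega
        rw [h3] at h2
        rw [div_eq_iff (by positivity)]
        exact_mod_cast h2.symm
      rw [hfac]
      have hF : (0:ℝ) < (i.factorial : ℝ) * ((k - 1).factorial : ℝ) := by positivity
      have hkey : z * ((i.factorial : ℝ) * ((k - 1).factorial : ℝ) * max (((k + i : ℕ) : ℝ) - z) 0)
          ≤ ((k + i).factorial : ℝ) := by
        rcases le_or_gt (((k + i : ℕ)) : ℝ) z with h | h
        · rw [max_eq_right (by linarith)]
          simp only [mul_zero]
          positivity
        · rw [max_eq_left (by linarith)]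
          have hcast : (((k + i : ℕ)) : ℝ) ^ 2 * (i.factorial : ℝ) * ((k - 1).factorial : ℝ)
              ≤ 4 * ((k + i).factorial : ℝ) := by exact_mod_cast nat_key k i hk hi1
          nlinarith [mul_nonneg (sq_nonneg ((((k + i : ℕ)) : ℝ) - 2 * z)) hF.le, hz0.le]
      have hinner : (i.factorial : ℝ) * ((k - 1).factorial : ℝ) * max (((k + i : ℕ) : ℝ) - z) 0
          / ((k + i).factorial : ℝ) ≤ 1 / z := by
        rw [div_le_div_iff₀ (by positivity) hz0, one_mul, mul_comm]
        exact hkey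
      calc ((α - k).choose i : ℝ) * (i.factorial : ℝ) *
              (((k - 1).factorial : ℝ) / ((k + i).factorial : ℝ)) * (p / q) ^ i *
              max (((k + i : ℕ)) - z) 0
          = (((α - k).choose i : ℝ) * (p / q) ^ i) *
              ((i.factorial : ℝ) * ((k - 1).factorial : ℝ) * max (((k + i : ℕ) : ℝ) - z) 0
                / ((k + i).factorial : ℝ)) := by push_cast; ring
        _ ≤ (((α - k).choose i : ℝ) * (p / q) ^ i) * (1 / z) := by
            apply mul_le_mul_of_nonneg_left hinner (by positivity)
        _ = ((α - k).choose i : ℝ) * (p / q) ^ i / z := by ring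
  have step2 : ∑ j ∈ Finset.Icc k α, g j = ((1 / q) ^ (α - k) - 1) / z := by
    have hsplit : ∀ j, g j = ((α - k).choose (j - k) : ℝ) * (p / q) ^ (j - k) / z -
        (if j = k then ((α - k).choose (j - k) : ℝ) * (p / q) ^ (j - k) / z else 0) := by
      intro j; by_cases h : j = k <;> simp [hg, h]
    rw [Finset.sum_congr rfl (fun j _ => hsplit j), Finset.sum_sub_distrib,
      Finset.sum_ite_eq' (Finset.Icc k α) k]
    have hk0 : k - k = 0 := by omega
    simp only [Finset.mem_Icc, le_refl, hkα, true_and, if_true, hk0, Nat.choose_zero_right,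
      pow_zero, Nat.cast_one, one_mul]
    have hmain : ∑ j ∈ Finset.Icc k α, ((α - k).choose (j - k) : ℝ) * (p / q) ^ (j - k) / z
        = (1 / q) ^ (α - k) / z := by
      rw [← Finset.Ico_add_one_right_eq_Icc, Finset.sum_Ico_eq_sum_range]
      have hrange : α + 1 - k = α - k + 1 := by omega
      rw [hrange]
      have : ∀ i, ((α - k).choose (k + i - k) : ℝ) * (p / q) ^ (k + i - k) / z
          = ((α - k).choose i : ℝ) * (p / q) ^ i / z := by
        intro i; rw [Nat.add_sub_cancel_left]
      rw [Finset.sum_congr rfl (fun i _ => this i), ← Finset.sum_div]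
      congr 1
      have hbin : (p / q + 1) ^ (α - k)
          = ∑ i ∈ Finset.range (α - k + 1), ((α - k).choose i : ℝ) * (p / q) ^ i := by
        rw [add_pow]
        exact Finset.sum_congr rfl fun i _ => by rw [one_pow]; ring
      rw [← hbin]
      congr 1
      have h1p : (1:ℝ) - p ≠ 0 := by linarith
      rw [hq]
      field_simp
      ring
    rw [hmain]
    ring
  have hpow : q ^ ((k : ℤ) - (α : ℤ)) = (1 / q) ^ (α - k) := by
    have hζ : (k : ℤ) - (α : ℤ) = -((α - k : ℕ) : ℤ) := by
      have : ((α - k : ℕ) : ℤ) = (α : ℤ) - (k : ℤ) := by exact_mod_cast Int.ofNat_sub hkα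
      omega
    rw [hζ, zpow_neg, zpow_natCast, ← inv_pow, one_div]
  calc _ ≤ ∑ j ∈ Finset.Icc k α, g j := step1
    _ = ((1 / q) ^ (α - k) - 1) / z := step2
    _ = (q ^ ((k : ℤ) - (α : ℤ)) - 1) / z := by rw [hpow]
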